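/- Let b ≥ 2 and let n ≥ 1 have base-b expansion n = r_k + r_{k−1}·b + r_{k−2}·b² + ⋯ + r_0·b^k with digits 0 ≤ r_j < b and leading digit r_0 ≥ 1. Then ‖n‖ ≤ ‖r_0‖ + Σ_{j=1}^{k} D(b, r_j). -/

import Mathlib

/-- `HasCpx n k` means the positive integer `n` can be written using exactly `k` ones,
additions and multiplications. -/
inductive HasCpx : ℕ → ℕ → Prop
  | one : HasCpx 1 1
  | add {a b j k : ℕ} : HasCpx a j → HasCpx b k → HasCpx (a + b) (j + k)
  | mul {a b j k : ℕ} : HasCpx a j → HasCpx b k → HasCpx (a * b) (j + k)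

/-- The integer complexity `‖n‖`: the least number of 1's needed to write `n` using
only `+` and `*`.  By convention (`sInf ∅ = 0` in `ℕ`) we have `cpx 0 = 0`. -/
noncomputable def cpx (n : ℕ) : ℕ := sInf {k | HasCpx n k}

/-- The digit cost `D b r`: the least `c` such that `‖b·n + r‖ ≤ ‖n‖ + c` for
every positive integer `n`. -/
noncomputable def D (b r : ℕ) : ℕ :=
  sInf {c : ℕ | ∀ n : ℕ, 1 ≤ n → cpx (b * n + r) ≤ cpx n + c}

lemma hasCpx_self : ∀ n : ℕ, 1 ≤ n → HasCpx n n := by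
  intro n hn
  induction n with
  | zero => omega
  | succ m ih =>
    rcases Nat.eq_zero_or_pos m with h | h
    · subst h; exact HasCpx.one
    · exact HasCpx.add (ih h) HasCpx.one

lemma cpx_mem (n : ℕ) (hn : 1 ≤ n) : HasCpx n (cpx n) :=
  Nat.sInf_mem ⟨n, hasCpx_self n hn⟩

lemma cpx_le {n k : ℕ} (h : HasCpx n k) : cpx n ≤ k :=
  Nat.sInf_le h

lemma cpx_add_le (a b : ℕ) (ha : 1 ≤ a) (hb : 1 ≤ b) :
    cpx (a + b) ≤ cpx a + cpx b :=
  cpx_le (HasCpx.add (cpx_mem a ha) (cpx_mem b hb))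

lemma cpx_mul_le (a b : ℕ) (ha : 1 ≤ a) (hb : 1 ≤ b) :
    cpx (a * b) ≤ cpx a + cpx b :=
  cpx_le (HasCpx.mul (cpx_mem a ha) (cpx_mem b hb))

lemma D_bound (b r n : ℕ) (hb : 1 ≤ b) (hn : 1 ≤ n) :
    cpx (b * n + r) ≤ cpx n + D b r := by
  have hne : {c : ℕ | ∀ n : ℕ, 1 ≤ n → cpx (b * n + r) ≤ cpx n + c}.Nonempty := by
    refine ⟨cpx b + cpx r, fun m hm => ?_⟩
    rcases Nat.eq_zero_or_pos r with h | h
    · subst h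
      have h0 : cpx 0 = 0 := by
        have : {k | HasCpx 0 k} = ∅ := by
          ext k; simp only [Set.mem_setOf_eq, Set.mem_empty_iff_false, iff_false]
          intro hk
          have : ∀ a j, HasCpx a j → 1 ≤ a := by
            intro a j h; induction h with
            | one => omega
            | add _ _ ih1 ih2 => omega
            | mul _ _ ih1 ih2 => exact Nat.one_le_iff_ne_zero.mpr (by positivity)
          exact absurd (this 0 k hk) (by omega)
        simp [cpx, this]
      calc cpx (b * m + 0) = cpx (b * m) := by ring_nf
        _ ≤ cpx b + cpx m := cpx_mul_le b m hb hm
        _ ≤ cpx m + (cpx b + cpx 0) := by omega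
    · calc cpx (b * m + r) ≤ cpx (b * m) + cpx r :=
            cpx_add_le _ _ (Nat.mul_pos hb hm) h
        _ ≤ cpx b + cpx m + cpx r := by
            have := cpx_mul_le b m hb hm; omega
        _ = cpx m + (cpx b + cpx r) := by ring
  have := Nat.sInf_mem hne
  exact this n hn

lemma aux_expansion (b : ℕ) (hb : 2 ≤ b) (r : ℕ → ℕ) :
    ∀ k : ℕ, 1 ≤ r 0 →
      cpx (∑ j ∈ Finset.range (k + 1), r j * b ^ (k - j)) ≤
        cpx (r 0) + ∑ j ∈ Finset.Icc 1 k, D b (r j) := by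
  intro k
  induction k with
  | zero => intro _; simp
  | succ k ih =>
    intro hlead
    set m := ∑ j ∈ Finset.range (k + 1), r j * b ^ (k - j) with hm
    have hmpos : 1 ≤ m := by
      have : r 0 * b ^ (k - 0) ≤ m := by
        apply Finset.single_le_sum (f := fun j => r j * b ^ (k - j))
        · intro i _; positivity
        · simp
      have hbk : 1 ≤ b ^ (k - 0) := Nat.one_le_pow _ _ (by omega)
      nlinarith
    have hsum : ∑ j ∈ Finset.range (k + 2), r j * b ^ (k + 1 - j)
        = b * m + r (k + 1) := by
      rw [Finset.sum_range_succ]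
      have : ∑ j ∈ Finset.range (k + 1), r j * b ^ (k + 1 - j) = b * m := by
        rw [hm, Finset.mul_sum]
        apply Finset.sum_congr rfl
        intro j hj
        simp only [Finset.mem_range] at hj
        have : k + 1 - j = (k - j) + 1 := by omega
        rw [this, pow_succ]
        ring
      rw [this]
      simp
    rw [hsum]
    have h1 : cpx (b * m + r (k + 1)) ≤ cpx m + D b (r (k + 1)) :=
      D_bound b (r (k + 1)) m (by omega) hmpos
    have h2 := ih hlead
    have h3 : ∑ j ∈ Finset.Icc 1 (k + 1), D b (r j)
        = (∑ j ∈ Finset.Icc 1 k, D b (r j)) + D b (r (k + 1)) :=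
      Finset.sum_Icc_succ_top (by omega) _
    omega

theorem complexity_le_base_expansion (b k n : ℕ) (r : ℕ → ℕ) (hb : 2 ≤ b)
    (hdig : ∀ j ≤ k, r j < b) (hlead : 1 ≤ r 0)
    (hn : n = ∑ j ∈ Finset.range (k + 1), r j * b ^ (k - j)) :
    cpx n ≤ cpx (r 0) + ∑ j ∈ Finset.Icc 1 k, D b (r j) := by
  subst hn
  exact aux_expansion b hb r k hlead
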